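/- arXiv:2101.04878 — 3 statements merged into one kernel-verified Lean document; each statement's English description precedes it below -/
import Mathlib

section
/- Suppose σ is invertible, ℙ-preserving, and ergodic, and (P,σ) is a Markov operator cocycle. If h ∈ L¹(Ω×X, ℙ×m) is a nonnegative function with ∫ h d(ℙ×m) = 1 which is a fixed point of the lift operator 𝒫, then for ℙ-almost every ω, the fiber h_ω = h(ω,·) lies in D(X,m), i.e., ∫_X h_ω dm = 1. -/
open MeasureTheory

/-- If `σ` is invertible, measure-preserving and ergodic and `h` is a
nonnegative fixed point of the lift operator of a Markov operator cocycle
with total integral one, then a.e. fiber `h_ω = h(ω,·)` is a probability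
density: `∫_X h_ω dm = 1` for ℙ-a.e. `ω`. -/
theorem fixed_point_fibers_are_densities
    {Ω : Type*} [MeasurableSpace Ω] (ℙ : Measure Ω) [IsProbabilityMeasure ℙ]
    {X : Type*} [MeasurableSpace X] (m : Measure X) [IsProbabilityMeasure m]
    (σ : Ω ≃ᵐ Ω) (hσ : Ergodic σ ℙ)
    (P : Ω → (Lp ℝ 1 m →L[ℝ] Lp ℝ 1 m))
    (hMarkov : ∀ᵐ ω ∂ℙ,
      (∀ g : Lp ℝ 1 m, 0 ≤ᵐ[m] ⇑g → 0 ≤ᵐ[m] ⇑(P ω g)) ∧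
      (∀ g : Lp ℝ 1 m, ∫ x, (P ω g) x ∂m = ∫ x, g x ∂m))
    (Plift : Lp ℝ 1 (ℙ.prod m) →ₗ[ℝ] Lp ℝ 1 (ℙ.prod m))
    (hlift : ∀ φ : Lp ℝ 1 (ℙ.prod m), ∀ᵐ ω ∂ℙ, ∀ g : Lp ℝ 1 m,
      (⇑g =ᵐ[m] fun x => φ (σ.symm ω, x)) →
      ((fun x => (Plift φ) (ω, x)) =ᵐ[m] ⇑(P (σ.symm ω) g)))
    (h : Lp ℝ 1 (ℙ.prod m))
    (hpos : 0 ≤ᵐ[ℙ.prod m] ⇑h)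
    (hint : ∫ p, h p ∂(ℙ.prod m) = 1)
    (hfix : Plift h = h) :
    ∀ᵐ ω ∂ℙ, ∫ x, h (ω, x) ∂m = 1 := by
  have hIntH : Integrable (fun p => h p) (ℙ.prod m) := L1.integrable_coeFn h
  have hqmp : Measure.QuasiMeasurePreserving σ.symm ℙ ℙ :=
    (hσ.toMeasurePreserving.symm σ).quasiMeasurePreserving
  set F : Ω → ℝ := fun ω => ∫ x, h (ω, x) ∂m with hF
  have hFint : Integrable F ℙ := hIntH.integral_prod_left
  have hFtot : ∫ ω, F ω ∂ℙ = 1 := by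
    rw [← hint, MeasureTheory.integral_prod _ hIntH]
  have hfib : ∀ᵐ ω ∂ℙ, Integrable (fun x => h (ω, x)) m := hIntH.prod_right_ae
  have hfib' : ∀ᵐ ω ∂ℙ, Integrable (fun x => h (σ.symm ω, x)) m := hqmp.ae hfib
  have hMarkov' : ∀ᵐ ω ∂ℙ,
      ∀ g : Lp ℝ 1 m, ∫ x, (P (σ.symm ω) g) x ∂m = ∫ x, g x ∂m :=
    hqmp.ae (hMarkov.mono fun ω hω => hω.2)
  have key : ∀ᵐ ω ∂ℙ, F ω = F (σ.symm ω) := by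
    filter_upwards [hfib', hMarkov', hlift h] with ω hInt2 hM hl
    set g : Lp ℝ 1 m := hInt2.toL1 _ with hgdef
    have hg : ⇑g =ᵐ[m] fun x => h (σ.symm ω, x) := hInt2.coeFn_toL1
    have h1 : (fun x => (Plift h) (ω, x)) =ᵐ[m] ⇑(P (σ.symm ω) g) := hl g hg
    rw [hfix] at h1
    calc F ω = ∫ x, (P (σ.symm ω) g) x ∂m := integral_congr_ae h1
      _ = ∫ x, g x ∂m := hM g
      _ = F (σ.symm ω) := integral_congr_ae hg
  have hcomp : F ∘ σ =ᵐ[ℙ] F := by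
    have := hσ.toMeasurePreserving.quasiMeasurePreserving.ae key
    filter_upwards [this] with ω hω
    simpa [Function.comp, σ.symm_apply_apply] using hω
  obtain ⟨c, hc⟩ := hσ.ae_eq_const_of_ae_eq_comp_ae hFint.aestronglyMeasurable hcomp
  have hc1 : c = 1 := by
    have h2 : ∫ ω, F ω ∂ℙ = c := by
      rw [integral_congr_ae hc]; simp
    rw [hFtot] at h2; exact h2.symm
  filter_upwards [hc] with ω hω
  simpa [hc1] using hω
end

section
/- For a random fibered system satisfying bounded distortion with constant C and the big-image property m(T^{(n)}_{σ^{-n}ω} X^ω_{i₁…i_n}) > c > 0 for all cylinders, the measures of pullbacks of cylinders are uniformly controlled: for every cylinder A of measure m(A) < δ = εc/C and every p ≥ 1, m((T^{(p)}_{σ^{-p}ω})⁻¹ A) < ε; consequently the transfer operator cocycle {ℒ^{(n)}_{σ^{-n}ω} 1_X}_n is uniformly integrable, hence weakly precompact in L¹(X,m), for ℙ-a.e. ω. -/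
open MeasureTheory Filter
open scoped ENNReal InnerProductSpace

/-- `T^{(n)}_ω = T_{σ^{n-1}ω} ∘ ⋯ ∘ T_ω`, `T^{(0)}_ω = id`. -/
def mapCocycle {Ω X : Type*} (σ : Ω → Ω) (T : Ω → X → X) : ℕ → Ω → X → X
  | 0, _ => id
  | n + 1, ω => mapCocycle σ T n (σ ω) ∘ T ω

/-- The cylinder of depth `n` with itinerary `w`, starting at environment `ω₀`. -/
def cylinderAt {Ω X I : Type*} (σ : Ω → Ω) (T : Ω → X → X) (part : I → Set X)
    (ω₀ : Ω) (n : ℕ) (w : Fin n → I) : Set X :=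
  {x | ∀ k : Fin n, mapCocycle σ T k ω₀ x ∈ part (w k)}

/-- `P_ω^{(n)} = P_{σ^{n-1}ω} ∘ ⋯ ∘ P_ω`, `P_ω^{(0)} = id`. -/
noncomputable def clmCocycle {Ω 𝔛 : Type*} [NormedAddCommGroup 𝔛] [NormedSpace ℝ 𝔛]
    (σ : Ω → Ω) (P : Ω → (𝔛 →L[ℝ] 𝔛)) : ℕ → Ω → (𝔛 →L[ℝ] 𝔛)
  | 0, _ => ContinuousLinearMap.id ℝ 𝔛
  | n + 1, ω => (clmCocycle σ P n (σ ω)).comp (P ω)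

/-- The constant function `1` as an element of `L¹(X,m)`. -/
noncomputable def oneLp {X : Type*} [MeasurableSpace X] (m : Measure X)
    [IsProbabilityMeasure m] : Lp ℝ 1 m :=
  indicatorConstLp 1 MeasurableSet.univ (by simp) (1 : ℝ)

/-- Weak sequential precompactness of a sequence. -/
def WeaklySeqPrecompact {E : Type*} [NormedAddCommGroup E] [NormedSpace ℝ E]
    (u : ℕ → E) : Prop :=
  ∀ φ : ℕ → ℕ, StrictMono φ → ∃ ψ : ℕ → ℕ, StrictMono ψ ∧ ∃ x : E,
    ∀ ℓ : E →L[ℝ] ℝ, Tendsto (fun k => ℓ (u (φ (ψ k)))) atTop (nhds (ℓ x))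


set_option maxHeartbeats 1000000 in
theorem hilbert_weak_seq {H : Type*} [NormedAddCommGroup H] [InnerProductSpace ℝ H]
    [CompleteSpace H] (u : ℕ → H) (K : ℝ) (hu : ∀ n, ‖u n‖ ≤ K) :
    ∃ ψ : ℕ → ℕ, StrictMono ψ ∧ ∃ x : H, ∀ y : H,
      Tendsto (fun k => ⟪u (ψ k), y⟫_ℝ) atTop (nhds ⟪x, y⟫_ℝ) := by
  have hK0 : 0 ≤ K := le_trans (norm_nonneg _) (hu 0)
  set F : ℕ → ℕ → ℝ := fun k m => ⟪u k, u m⟫_ℝ with hF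
  have hFmem : ∀ k, F k ∈ Set.pi Set.univ (fun _ : ℕ => Set.Icc (-(K*K)) (K*K)) := by
    intro k m _
    have h1 : |⟪u k, u m⟫_ℝ| ≤ ‖u k‖ * ‖u m‖ := abs_real_inner_le_norm _ _
    have h2 : ‖u k‖ * ‖u m‖ ≤ K * K :=
      mul_le_mul (hu k) (hu m) (norm_nonneg _) hK0
    have := abs_le.mp (h1.trans h2)
    exact ⟨this.1, this.2⟩
  obtain ⟨g, -, φ, hφ, hconv⟩ :=
    (isCompact_univ_pi fun _ : ℕ => isCompact_Icc).tendsto_subseq hFmem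
  have hpt : ∀ m, Tendsto (fun k => ⟪u (φ k), u m⟫_ℝ) atTop (nhds (g m)) := by
    intro m
    exact (tendsto_pi_nhds.mp hconv m)
  set v : ℕ → H := u ∘ φ with hv
  have hspan : ∀ y ∈ Submodule.span ℝ (Set.range u),
      ∃ L : ℝ, Tendsto (fun k => ⟪v k, y⟫_ℝ) atTop (nhds L) := by
    intro y hy
    induction hy using Submodule.span_induction with
    | mem y hy =>
        obtain ⟨m, rfl⟩ := hy
        exact ⟨g m, hpt m⟩
    | zero => exact ⟨0, by simpa using (tendsto_const_nhds : Tendsto (fun _ : ℕ => (0:ℝ)) atTop _)⟩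
    | add y z _ _ hy hz =>
        obtain ⟨Ly, hLy⟩ := hy; obtain ⟨Lz, hLz⟩ := hz
        exact ⟨Ly + Lz, by simpa [inner_add_right] using hLy.add hLz⟩
    | smul a y _ hy =>
        obtain ⟨Ly, hLy⟩ := hy
        exact ⟨a * Ly, by simpa [inner_smul_right] using hLy.const_mul a⟩
  have hclos : ∀ y ∈ closure ((Submodule.span ℝ (Set.range u) : Submodule ℝ H) : Set H),
      ∃ L : ℝ, Tendsto (fun k => ⟪v k, y⟫_ℝ) atTop (nhds L) := by
    intro y hy
    have hC : CauchySeq (fun k => ⟪v k, y⟫_ℝ) := by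
      rw [Metric.cauchySeq_iff]
      intro ε hε
      obtain ⟨y', hy'mem, hy'close⟩ :
          ∃ y' ∈ ((Submodule.span ℝ (Set.range u) : Submodule ℝ H) : Set H),
            dist y y' < ε/(3*(K+1)) :=
        Metric.mem_closure_iff.mp hy _ (by positivity)
      rw [dist_eq_norm] at hy'close
      obtain ⟨L', hL'⟩ := hspan y' hy'mem
      obtain ⟨N, hN⟩ := Metric.cauchySeq_iff.mp hL'.cauchySeq (ε/3) (by positivity)
      refine ⟨N, fun a ha b hb => ?_⟩
      have key : ∀ k, |⟪v k, y⟫_ℝ - ⟪v k, y'⟫_ℝ| ≤ K * ‖y - y'‖ := by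
        intro k
        rw [← inner_sub_right]
        exact (abs_real_inner_le_norm _ _).trans
          (mul_le_mul_of_nonneg_right (hu _) (norm_nonneg _))
      have hKy : K * ‖y - y'‖ < ε/3 := by
        have h0 : 0 ≤ ‖y - y'‖ := norm_nonneg _
        have h1 : ‖y - y'‖ * (3*(K+1)) < ε := by
          rw [← lt_div_iff₀ (by positivity)]; exact hy'close
        rw [lt_div_iff₀ (by norm_num : (0:ℝ) < 3)]
        nlinarith [mul_nonneg hK0 h0, h0]
      have hab := hN a ha b hb
      rw [Real.dist_eq] at hab ⊢
      have ka := key a; have kb := key b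
      calc |⟪v a, y⟫_ℝ - ⟪v b, y⟫_ℝ|
          ≤ |⟪v a, y⟫_ℝ - ⟪v a, y'⟫_ℝ| + |⟪v a, y'⟫_ℝ - ⟪v b, y'⟫_ℝ|
              + |⟪v b, y'⟫_ℝ - ⟪v b, y⟫_ℝ| := by
            have := abs_sub_le (⟪v a, y⟫_ℝ) (⟪v a, y'⟫_ℝ) (⟪v b, y⟫_ℝ)
            have := abs_sub_le (⟪v a, y'⟫_ℝ) (⟪v b, y'⟫_ℝ) (⟪v b, y⟫_ℝ)
            linarith [abs_sub_le (⟪v a, y⟫_ℝ) (⟪v a, y'⟫_ℝ) (⟪v b, y⟫_ℝ),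
              abs_sub_le (⟪v a, y'⟫_ℝ) (⟪v b, y'⟫_ℝ) (⟪v b, y⟫_ℝ)]
        _ < ε := by
            have kb' : |⟪v b, y'⟫_ℝ - ⟪v b, y⟫_ℝ| ≤ K * ‖y - y'‖ := by
              rw [abs_sub_comm]; exact kb
            linarith
    exact cauchySeq_tendsto_of_complete hC
  set S : Submodule ℝ H := (Submodule.span ℝ (Set.range u)).topologicalClosure with hS
  haveI : CompleteSpace S :=
    IsClosed.completeSpace_coe (hs := Submodule.isClosed_topologicalClosure _)
  have hvS : ∀ k, (v k : H) ∈ S := fun k =>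
    Submodule.le_topologicalClosure _ (Submodule.subset_span ⟨φ k, rfl⟩)
  have hall : ∀ y : H, ∃ L : ℝ, Tendsto (fun k => ⟪v k, y⟫_ℝ) atTop (nhds L) := by
    intro y
    have hP : ((S.orthogonalProjectionOnto y : S) : H) ∈
        closure ((Submodule.span ℝ (Set.range u) : Submodule ℝ H) : Set H) := by
      rw [← Submodule.topologicalClosure_coe]
      exact (S.orthogonalProjectionOnto y).2
    obtain ⟨L, hL⟩ := hclos _ hP
    refine ⟨L, ?_⟩
    have heq : ∀ k, ⟪v k, y⟫_ℝ = ⟪v k, ((S.orthogonalProjectionOnto y : S) : H)⟫_ℝ := by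
      intro k
      have horth : y - ((S.orthogonalProjectionOnto y : S) : H) ∈ Sᗮ :=
        Submodule.sub_starProjection_mem_orthogonal (K := S) y
      have h0 : ⟪v k, y - ((S.orthogonalProjectionOnto y : S) : H)⟫_ℝ = 0 :=
        horth (v k) (hvS k)
      have := inner_sub_right (𝕜 := ℝ) (v k) y ((S.orthogonalProjectionOnto y : S) : H)
      rw [h0] at this
      linarith [this]
    simpa only [heq] using hL
  choose L hL using hall
  have hbound : ∀ y, |L y| ≤ K * ‖y‖ := by
    intro y
    refine le_of_tendsto (hL y).abs (Eventually.of_forall fun k => ?_)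
    exact (abs_real_inner_le_norm _ _).trans (mul_le_mul_of_nonneg_right (hu _) (norm_nonneg _))
  have hadd : ∀ y z, L (y + z) = L y + L z := by
    intro y z
    refine tendsto_nhds_unique (hL (y + z)) ?_
    simpa [inner_add_right] using (hL y).add (hL z)
  have hsmul : ∀ (a : ℝ) (y : H), L (a • y) = a * L y := by
    intro a y
    refine tendsto_nhds_unique (hL (a • y)) ?_
    simpa [inner_smul_right] using (hL y).const_mul a
  let ℓ : H →ₗ[ℝ] ℝ := { toFun := L, map_add' := hadd, map_smul' := hsmul }
  let ℓ' : H →L[ℝ] ℝ := ℓ.mkContinuous K fun y => by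
    rw [Real.norm_eq_abs]; exact hbound y
  refine ⟨φ, hφ, (InnerProductSpace.toDual ℝ H).symm ℓ', fun y => ?_⟩
  have hx : ⟪(InnerProductSpace.toDual ℝ H).symm ℓ', y⟫_ℝ = ℓ' y :=
    InnerProductSpace.toDual_symm_apply
  rw [hx]
  exact hL y


theorem weaklySeqPrecompact_of_ae_bound {X : Type*} [MeasurableSpace X] {m : Measure X}
    [IsProbabilityMeasure m] (u : ℕ → Lp ℝ 1 m) (K : ℝ) (hK0 : 0 ≤ K)
    (hb : ∀ n, ∀ᵐ x ∂m, ‖(u n : X → ℝ) x‖ ≤ K) :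
    WeaklySeqPrecompact u := by
  have h12 : (1 : ℝ≥0∞) ≤ 2 := by norm_num
  -- the L² representatives
  have memL2 : ∀ n, MemLp (u n : X → ℝ) 2 m := fun n =>
    MemLp.of_bound (Lp.aestronglyMeasurable (u n)) K (hb n)
  set v : ℕ → Lp ℝ 2 m := fun n => (memL2 n).toLp _ with hv
  -- the inclusion L² → L¹ as a function
  set incl : Lp ℝ 2 m → Lp ℝ 1 m :=
    fun f => ((Lp.memLp f).mono_exponent h12).toLp _ with hincl
  have hincl_coe : ∀ f : Lp ℝ 2 m, (incl f : X → ℝ) =ᵐ[m] f := fun f =>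
    MemLp.coeFn_toLp _
  have hincl_norm : ∀ f : Lp ℝ 2 m, ‖incl f‖ ≤ ‖f‖ := by
    intro f
    rw [hincl]
    simp only []
    rw [Lp.norm_toLp _ (MemLp.mono_exponent (Lp.memLp f) h12)]
    have h1 : eLpNorm (f : X → ℝ) 1 m ≤ eLpNorm (f : X → ℝ) 2 m :=
      eLpNorm_le_eLpNorm_of_exponent_le h12 (Lp.aestronglyMeasurable f)
    have h2 := Lp.eLpNorm_ne_top f
    calc (eLpNorm (f : X → ℝ) 1 m).toReal ≤ (eLpNorm (f : X → ℝ) 2 m).toReal :=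
          ENNReal.toReal_mono h2 h1
      _ = ‖f‖ := (Lp.norm_def f).symm
  have hincl_add : ∀ f g : Lp ℝ 2 m, incl (f + g) = incl f + incl g := by
    intro f g
    apply Lp.ext
    filter_upwards [hincl_coe (f + g), hincl_coe f, hincl_coe g,
      Lp.coeFn_add f g, Lp.coeFn_add (incl f) (incl g)] with x h1 h2 h3 h4 h5
    rw [h1, h4, h5]
    simp [h2, h3]
  have hincl_smul : ∀ (a : ℝ) (f : Lp ℝ 2 m), incl (a • f) = a • incl f := by
    intro a f
    apply Lp.ext
    filter_upwards [hincl_coe (a • f), hincl_coe f,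
      Lp.coeFn_smul a f, Lp.coeFn_smul a (incl f)] with x h1 h2 h3 h4
    rw [h1, h3, h4]
    simp [h2]
  have hvu : ∀ n, incl (v n) = u n := by
    intro n
    apply Lp.ext
    filter_upwards [hincl_coe (v n), MemLp.coeFn_toLp (memL2 n)] with x h1 h2
    rw [h1, h2]
  -- bound on the L² norms
  have hvnorm : ∀ n, ‖v n‖ ≤ K := by
    intro n
    rw [hv]
    simp only []
    rw [Lp.norm_toLp _ (memL2 n)]
    have h1 : eLpNorm (u n : X → ℝ) 2 m ≤ m Set.univ ^ ((2:ℝ≥0∞).toReal)⁻¹ * ENNReal.ofReal K :=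
      eLpNorm_le_of_ae_bound (hb n)
    rw [measure_univ] at h1
    simp only [ENNReal.one_rpow, one_mul] at h1
    calc (eLpNorm (u n : X → ℝ) 2 m).toReal ≤ (ENNReal.ofReal K).toReal :=
          ENNReal.toReal_mono ENNReal.ofReal_ne_top h1
      _ = K := ENNReal.toReal_ofReal hK0
  intro φ hφ
  obtain ⟨ψ, hψ, x₂, hx₂⟩ := hilbert_weak_seq (fun k => v (φ k)) K (fun k => hvnorm _)
  refine ⟨ψ, hψ, incl x₂, fun ℓ => ?_⟩
  -- ℓ ∘ incl as a continuous linear functional on L²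
  set ℓ₂ : Lp ℝ 2 m →L[ℝ] ℝ :=
    LinearMap.mkContinuous
      { toFun := fun f => ℓ (incl f)
        map_add' := fun f g => by
          show ℓ (incl (f + g)) = ℓ (incl f) + ℓ (incl g)
          rw [hincl_add]; exact ℓ.map_add _ _
        map_smul' := fun a f => by
          show ℓ (incl (a • f)) = a • ℓ (incl f)
          rw [hincl_smul]; exact ℓ.map_smul _ _ }
      ‖ℓ‖ (fun f => by
        calc ‖ℓ (incl f)‖ ≤ ‖ℓ‖ * ‖incl f‖ := ℓ.le_opNorm _
          _ ≤ ‖ℓ‖ * ‖f‖ := by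
              exact mul_le_mul_of_nonneg_left (hincl_norm f) (norm_nonneg ℓ)) with hℓ₂
  have hℓ₂app : ∀ f, ℓ₂ f = ℓ (incl f) := fun f => rfl
  set y₂ := (InnerProductSpace.toDual ℝ (Lp ℝ 2 m)).symm ℓ₂ with hy₂
  have hriesz : ∀ f, ℓ₂ f = ⟪f, y₂⟫_ℝ := by
    intro f
    rw [real_inner_comm, hy₂, InnerProductSpace.toDual_symm_apply]
  have := hx₂ y₂
  have key : Tendsto (fun k => ℓ₂ (v (φ (ψ k)))) atTop (nhds (ℓ₂ x₂)) := by
    rw [hriesz x₂]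
    simpa only [hriesz] using this
  simpa only [hℓ₂app, hvu] using key


theorem key_bound {X : Type*} [MeasurableSpace X] (m : Measure X) [IsProbabilityMeasure m]
    (f : X → X) (hf : Measurable f) (hmap : m.map f ≪ m)
    {J : Type*} [Countable J] (Z : J → Set X) (hZm : ∀ j, MeasurableSet (Z j))
    (hZd : Pairwise (Function.onFun Disjoint Z)) (hZu : ⋃ j, Z j = Set.univ)
    (C c : ℝ≥0∞) (hc0 : c ≠ 0) (hct : c ≠ ⊤)
    (hdist : ∀ j, (Z j).Nonempty →
      essSup (((m.restrict (Z j)).map f).rnDeriv m) (m.restrict (f '' Z j))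
        ≤ C * essInf (((m.restrict (Z j)).map f).rnDeriv m) (m.restrict (f '' Z j)))
    (hbig : ∀ j, (Z j).Nonempty → c < m (f '' Z j))
    (A : Set X) (hA : MeasurableSet A) :
    m (f ⁻¹' A) ≤ C / c * m A := by
  have hj : ∀ j, m (f ⁻¹' A ∩ Z j) ≤ C / c * m (Z j) * m A := by
    intro j
    rcases (Z j).eq_empty_or_nonempty with he | hne
    · simp [he]
    set μ : Measure X := (m.restrict (Z j)).map f with hμ
    have hμm : μ ≪ m :=
      (Measure.absolutelyContinuous_of_le
        (Measure.map_mono Measure.restrict_le_self hf)).trans hmap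
    set h : X → ℝ≥0∞ := μ.rnDeriv m with hh
    set U : Set X := toMeasurable m (f '' Z j) with hU
    have hUm : MeasurableSet U := measurableSet_toMeasurable m _
    have hImU : f '' Z j ⊆ U := subset_toMeasurable m _
    have hmU : m U = m (f '' Z j) := measure_toMeasurable _
    have hrestU : m.restrict U = m.restrict (f '' Z j) :=
      Measure.restrict_toMeasurable (measure_ne_top m _)
    -- μ vanishes outside U
    have hμUc : μ Uᶜ = 0 := by
      rw [hμ, Measure.map_apply hf hUm.compl,
        Measure.restrict_apply (hf hUm.compl)]
      have : f ⁻¹' Uᶜ ∩ Z j = ∅ := by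
        ext x
        simp only [Set.mem_inter_iff, Set.mem_preimage, Set.mem_compl_iff,
          Set.mem_empty_iff_false, iff_false, not_and]
        intro hxU hxZ
        exact hxU (hImU ⟨x, hxZ, rfl⟩)
      rw [this, measure_empty]
    set M : ℝ≥0∞ := essSup h (m.restrict (f '' Z j)) with hM
    set iE : ℝ≥0∞ := essInf h (m.restrict (f '' Z j)) with hiE
    -- essInf bound : iE * c ≤ m (Z j)
    have hiEle : iE ≤ m (Z j) / c := by
      have h1 : ∀ᵐ x ∂(m.restrict U), iE ≤ h x := by
        rw [hrestU]; exact ae_essInf_le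
      have h2 : iE * m U ≤ ∫⁻ x in U, h x ∂m := by
        calc iE * m U = ∫⁻ _ in U, iE ∂m := by
              rw [setLIntegral_const]
          _ ≤ ∫⁻ x in U, h x ∂m := lintegral_mono_ae h1
      have h3 : ∫⁻ x in U, h x ∂m = μ U := Measure.setLIntegral_rnDeriv hμm U
      have h4 : μ U ≤ m (Z j) := by
        rw [hμ, Measure.map_apply hf hUm, Measure.restrict_apply (hf hUm)]
        exact measure_mono Set.inter_subset_right
      have h5 : iE * c ≤ m (Z j) := by
        calc iE * c ≤ iE * m U := by
              exact mul_le_mul_right (hmU ▸ (hbig j hne).le) iE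
          _ ≤ m (Z j) := h2.trans (h3.le.trans h4)
      rw [ENNReal.le_div_iff_mul_le (Or.inl hc0) (Or.inl hct)]
      exact h5
    -- pointwise bound on A ∩ U
    have hbound : m (f ⁻¹' A ∩ Z j) ≤ M * m A := by
      have hμA : m (f ⁻¹' A ∩ Z j) = μ A := by
        rw [hμ, Measure.map_apply hf hA, Measure.restrict_apply (hf hA)]
      have hsplit : μ A ≤ μ (A ∩ U) + μ Uᶜ := by
        calc μ A ≤ μ ((A ∩ U) ∪ Uᶜ) := measure_mono (by
              intro x hx
              by_cases hxU : x ∈ U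
              · exact Or.inl ⟨hx, hxU⟩
              · exact Or.inr hxU)
          _ ≤ μ (A ∩ U) + μ Uᶜ := measure_union_le _ _
      have hAU : μ (A ∩ U) = ∫⁻ x in A ∩ U, h x ∂m :=
        (Measure.setLIntegral_rnDeriv hμm _).symm
      have hle : ∀ᵐ x ∂(m.restrict (A ∩ U)), h x ≤ M := by
        have h1 : ∀ᵐ x ∂(m.restrict U), h x ≤ M := by
          rw [hrestU]; exact ae_le_essSup
        exact Eventually.filter_mono
          (ae_mono (Measure.restrict_mono Set.inter_subset_right le_rfl)) h1
      calc m (f ⁻¹' A ∩ Z j) = μ A := hμA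
        _ ≤ μ (A ∩ U) + μ Uᶜ := hsplit
        _ = μ (A ∩ U) := by rw [hμUc, add_zero]
        _ = ∫⁻ x in A ∩ U, h x ∂m := hAU
        _ ≤ ∫⁻ _ in A ∩ U, M ∂m := lintegral_mono_ae hle
        _ = M * m (A ∩ U) := by rw [setLIntegral_const]
        _ ≤ M * m A := mul_le_mul_right (measure_mono Set.inter_subset_left) M
    calc m (f ⁻¹' A ∩ Z j) ≤ M * m A := hbound
      _ ≤ C * iE * m A := mul_le_mul_left (hdist j hne) _
      _ ≤ C * (m (Z j) / c) * m A :=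
          mul_le_mul_left (mul_le_mul_right hiEle C) _
      _ = C / c * m (Z j) * m A := by
          rw [div_eq_mul_inv, div_eq_mul_inv]; ring
  -- sum over the partition
  have hcov : f ⁻¹' A = ⋃ j, f ⁻¹' A ∩ Z j := by
    rw [← Set.inter_iUnion, hZu, Set.inter_univ]
  have hd' : Pairwise (Function.onFun Disjoint fun j => f ⁻¹' A ∩ Z j) := by
    intro i j hij
    exact (hZd hij).mono Set.inter_subset_right Set.inter_subset_right
  have hmeas' : ∀ j, MeasurableSet (f ⁻¹' A ∩ Z j) := fun j => (hf hA).inter (hZm j)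
  have hsum : ∑' j, m (Z j) = 1 := by
    rw [← measure_iUnion hZd hZm, hZu, measure_univ]
  calc m (f ⁻¹' A) = ∑' j, m (f ⁻¹' A ∩ Z j) := by
        conv_lhs => rw [hcov]
        exact measure_iUnion hd' hmeas'
    _ ≤ ∑' j, C / c * m (Z j) * m A := ENNReal.tsum_le_tsum hj
    _ = ∑' j, C / c * m A * m (Z j) := by
        congr 1; funext j; ring
    _ = C / c * m A * ∑' j, m (Z j) := by rw [ENNReal.tsum_mul_left]
    _ = C / c * m A := by rw [hsum, mul_one]


theorem measurable_mapCocycle {Ω X : Type*} [MeasurableSpace X] (σ : Ω → Ω) (T : Ω → X → X)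
    (hT : ∀ ω, Measurable (T ω)) : ∀ (n : ℕ) (ω : Ω), Measurable (mapCocycle σ T n ω)
  | 0, _ => measurable_id
  | n + 1, ω => (measurable_mapCocycle σ T hT n (σ ω)).comp (hT ω)

theorem mapCocycle_map_ac {Ω X : Type*} [MeasurableSpace X] {m : Measure X}
    (σ : Ω → Ω) (T : Ω → X → X) (hT : ∀ ω, Measurable (T ω))
    (hns : ∀ ω, m.map (T ω) ≪ m) :
    ∀ (n : ℕ) (ω : Ω), m.map (mapCocycle σ T n ω) ≪ m := by
  intro n
  induction n with
  | zero => intro ω; rw [show mapCocycle σ T 0 ω = id from rfl, Measure.map_id]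
  | succ n ih =>
    intro ω
    rw [show mapCocycle σ T (n + 1) ω = mapCocycle σ T n (σ ω) ∘ T ω from rfl,
      ← Measure.map_map (measurable_mapCocycle σ T hT n (σ ω)) (hT ω)]
    exact ((hns ω).map (measurable_mapCocycle σ T hT n (σ ω))).trans (ih (σ ω))

theorem measurableSet_cylinderAt {Ω X I : Type*} [MeasurableSpace X] (σ : Ω → Ω)
    (T : Ω → X → X) (hT : ∀ ω, Measurable (T ω)) (part : I → Set X)
    (hmeas : ∀ i, MeasurableSet (part i)) (ω₀ : Ω) (n : ℕ) (w : Fin n → I) :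
    MeasurableSet (cylinderAt σ T part ω₀ n w) := by
  have : cylinderAt σ T part ω₀ n w = ⋂ k : Fin n, (mapCocycle σ T k ω₀) ⁻¹' part (w k) := by
    ext x; simp [cylinderAt, Set.mem_iInter, Set.mem_preimage]
  rw [this]
  exact MeasurableSet.iInter fun k => (measurable_mapCocycle σ T hT k ω₀) (hmeas (w k))

theorem integral_clmCocycle {Ω X : Type*} [MeasurableSpace X] {m : Measure X}
    [IsProbabilityMeasure m] (σ : Ω → Ω) (T : Ω → X → X) (hT : ∀ ω, Measurable (T ω))
    (L : Ω → (Lp ℝ 1 m →L[ℝ] Lp ℝ 1 m))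
    (hL : ∀ (ω : Ω) (g : Lp ℝ 1 m) (A : Set X), MeasurableSet A →
      ∫ x in (T ω) ⁻¹' A, g x ∂m = ∫ x in A, (L ω g) x ∂m) :
    ∀ (n : ℕ) (ω : Ω) (g : Lp ℝ 1 m) (A : Set X), MeasurableSet A →
      ∫ x in (mapCocycle σ T n ω) ⁻¹' A, g x ∂m
        = ∫ x in A, (clmCocycle σ L n ω g) x ∂m := by
  intro n
  induction n with
  | zero =>
    intro ω g A hA
    rw [show mapCocycle σ T 0 ω = id from rfl, show clmCocycle σ L 0 ω = ContinuousLinearMap.id ℝ _ from rfl]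
    simp
  | succ n ih =>
    intro ω g A hA
    have h1 : (mapCocycle σ T (n + 1) ω) ⁻¹' A
        = (T ω) ⁻¹' ((mapCocycle σ T n (σ ω)) ⁻¹' A) := rfl
    rw [h1, hL ω g _ ((measurable_mapCocycle σ T hT n (σ ω)) hA), ih (σ ω) (L ω g) A hA]
    rfl



/-- For a random fibered system with bounded distortion (constant `C`) and big
images (constant `c`): pullbacks of small cylinders are uniformly small
(`m(A) < εc/C` implies `m((T^{(p)}_{σ^{-p}ω})⁻¹A) < ε`), and consequently the
transfer operator cocycle `{ℒ^{(n)}_{σ^{-n}ω} 1_X}_n` is uniformly integrable,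
hence weakly precompact in `L¹(X,m)`, for ℙ-a.e. `ω`. -/
theorem random_fibered_system_uniform_integrability
    {Ω : Type*} [MeasurableSpace Ω] (ℙ : Measure Ω) [IsProbabilityMeasure ℙ]
    {X : Type*} [MeasurableSpace X] (m : Measure X) [IsProbabilityMeasure m]
    {I : Type*} [Countable I]
    (σ : Ω ≃ᵐ Ω) (hσ : Ergodic σ ℙ)
    (T : Ω → X → X) (hT : ∀ ω, Measurable (T ω))
    (hns : ∀ ω, m.map (T ω) ≪ m)
    (part : I → Set X) (hmeas : ∀ i, MeasurableSet (part i))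
    (hdisj : Pairwise (Function.onFun Disjoint part))
    (hcover : (⋃ i, part i) = Set.univ)
    (hinj : ∀ ω i, Set.InjOn (T ω) (part i))
    -- generator condition: cylinders generate the σ-algebra mod m
    (hgen : ∀ᵐ ω ∂ℙ, ∀ B : Set X, MeasurableSet B → ∀ ε > (0 : ℝ),
      ∃ (k : ℕ) (ws : Fin k → Σ n : ℕ, Fin n → I),
        m (symmDiff B (⋃ j, cylinderAt σ T part (σ.symm^[(ws j).1] ω)
          (ws j).1 (ws j).2)) < ENNReal.ofReal ε)
    -- bounded distortion with constant C
    (C : ℝ≥0∞) (hC : 1 ≤ C) (hCtop : C ≠ ⊤)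
    (hdistortion : ∀ᵐ ω ∂ℙ, ∀ (n : ℕ) (w : Fin n → I),
      (cylinderAt σ T part (σ.symm^[n] ω) n w).Nonempty →
      essSup
        (((m.restrict (cylinderAt σ T part (σ.symm^[n] ω) n w)).map
            (mapCocycle σ T n (σ.symm^[n] ω))).rnDeriv m)
        (m.restrict (mapCocycle σ T n (σ.symm^[n] ω) ''
            cylinderAt σ T part (σ.symm^[n] ω) n w))
      ≤ C *
        essInf
          (((m.restrict (cylinderAt σ T part (σ.symm^[n] ω) n w)).map
              (mapCocycle σ T n (σ.symm^[n] ω))).rnDeriv m)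
          (m.restrict (mapCocycle σ T n (σ.symm^[n] ω) ''
              cylinderAt σ T part (σ.symm^[n] ω) n w)))
    -- big images with constant c
    (c : ℝ≥0∞) (hc : 0 < c)
    (hbig : ∀ᵐ ω ∂ℙ, ∀ (n : ℕ) (w : Fin n → I),
      (cylinderAt σ T part (σ.symm^[n] ω) n w).Nonempty →
      c < m (mapCocycle σ T n (σ.symm^[n] ω) ''
          cylinderAt σ T part (σ.symm^[n] ω) n w))
    -- the fiberwise Perron–Frobenius operators
    (L : Ω → (Lp ℝ 1 m →L[ℝ] Lp ℝ 1 m))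
    (hL : ∀ (ω : Ω) (g : Lp ℝ 1 m) (A : Set X), MeasurableSet A →
      ∫ x in (T ω) ⁻¹' A, g x ∂m = ∫ x in A, (L ω g) x ∂m) :
    ∀ᵐ ω ∂ℙ,
      (∀ ε > (0 : ℝ), ∀ (n : ℕ) (w : Fin n → I),
        m (cylinderAt σ T part (σ.symm^[n] ω) n w) < ENNReal.ofReal ε * c / C →
        ∀ p : ℕ, 1 ≤ p →
          m ((mapCocycle σ T p (σ.symm^[p] ω)) ⁻¹'
              cylinderAt σ T part (σ.symm^[n] ω) n w) < ENNReal.ofReal ε) ∧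
      (∀ ε > (0 : ℝ), ∃ δ > (0 : ℝ), ∀ A : Set X, MeasurableSet A →
        m A < ENNReal.ofReal δ → ∀ n : ℕ,
          ∫ x in A, (clmCocycle σ L n (σ.symm^[n] ω) (oneLp m)) x ∂m < ε) ∧
      WeaklySeqPrecompact
        (fun n : ℕ => clmCocycle σ L n (σ.symm^[n] ω) (oneLp m)) := by
  
  filter_upwards [hdistortion, hbig] with ω hdist hbigω
  -- basic constant facts
  have hC0 : C ≠ 0 := by
    intro h; rw [h] at hC; exact absurd hC (by simp)
  have hXne : (Set.univ : Set X).Nonempty := by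
    by_contra h
    rw [Set.not_nonempty_iff_eq_empty] at h
    have := measure_univ (μ := m)
    rw [h, measure_empty] at this
    exact zero_ne_one this
  have hc1 : c < 1 := by
    have h := hbigω 0 (fun k => k.elim0)
    have hcyl : cylinderAt σ T part (σ.symm^[0] ω) 0 (fun k => k.elim0) = Set.univ := by
      ext x
      simp only [cylinderAt, Set.mem_setOf_eq, Set.mem_univ, iff_true]
      intro k; exact k.elim0
    rw [hcyl] at h
    have h2 := h hXne
    rw [show mapCocycle σ T 0 (σ.symm^[0] ω) = id from rfl, Set.image_id,
      measure_univ] at h2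
    exact h2
  have hct : c ≠ ⊤ := (hc1.trans ENNReal.one_lt_top).ne
  have hc0 : c ≠ 0 := hc.ne'
  have hdiv0 : C / c ≠ 0 := (ENNReal.div_pos hC0 hct).ne'
  have hdivt : C / c ≠ ⊤ := (ENNReal.div_lt_top hCtop hc0).ne
  -- the key pullback bound
  have hkey : ∀ (p : ℕ) (A : Set X), MeasurableSet A →
      m ((mapCocycle σ T p (σ.symm^[p] ω)) ⁻¹' A) ≤ C / c * m A := by
    intro p A hA
    refine key_bound m _ (measurable_mapCocycle σ T hT p _)
      (mapCocycle_map_ac σ T hT hns p _)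
      (fun w : Fin p → I => cylinderAt σ T part (σ.symm^[p] ω) p w)
      (fun w => measurableSet_cylinderAt σ T hT part hmeas _ p w) ?_ ?_ C c hc0 hct
      (hdist p) (hbigω p) A hA
    · intro w w' hww
      obtain ⟨k, hk⟩ := Function.ne_iff.mp hww
      rw [Function.onFun, Set.disjoint_left]
      intro x hx hx'
      exact Set.disjoint_left.mp (hdisj hk) (hx k) (hx' k)
    · rw [Set.eq_univ_iff_forall]
      intro x
      have hex : ∀ k : Fin p, ∃ i, mapCocycle σ T k (σ.symm^[p] ω) x ∈ part i := by
        intro k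
        have : mapCocycle σ T k (σ.symm^[p] ω) x ∈ ⋃ i, part i := by
          rw [hcover]; trivial
        exact Set.mem_iUnion.mp this
      choose w hw using hex
      exact Set.mem_iUnion.mpr ⟨w, hw⟩
  -- the main smallness estimate
  have halg : ∀ ε > (0 : ℝ), ∀ B : Set X, MeasurableSet B →
      m B < ENNReal.ofReal ε * c / C → ∀ p : ℕ,
      m ((mapCocycle σ T p (σ.symm^[p] ω)) ⁻¹' B) < ENNReal.ofReal ε := by
    intro ε hε B hB hsmall p
    have h1 : m B * C < ENNReal.ofReal ε * c := ENNReal.mul_lt_of_lt_div hsmall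
    refine lt_of_le_of_lt (hkey p B hB) ?_
    have h2 : C / c * m B = m B * C / c := by
      rw [div_eq_mul_inv, div_eq_mul_inv]; ring
    rw [h2, ENNReal.div_lt_iff (Or.inl hc0) (Or.inl hct)]
    exact h1
  -- integral formula
  have hval : ∀ (k : ℕ) (A : Set X), MeasurableSet A →
      ∫ x in A, (clmCocycle σ L k (σ.symm^[k] ω) (oneLp m)) x ∂m
        = (m ((mapCocycle σ T k (σ.symm^[k] ω)) ⁻¹' A)).toReal := by
    intro k A hA
    rw [← integral_clmCocycle σ T hT L hL k _ (oneLp m) A hA]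
    have h1 : ∀ᵐ x ∂m, (oneLp m : X → ℝ) x = 1 := by
      filter_upwards [indicatorConstLp_coeFn
        (p := 1) (μ := m) (hs := MeasurableSet.univ) (hμs := by simp) (c := (1:ℝ))] with x hx
      rw [oneLp] at *
      simpa using hx
    rw [integral_congr_ae (ae_restrict_of_ae h1)]
    simp
    rfl
  refine ⟨?_, ?_, ?_⟩
  · -- part 1
    intro ε hε n w hsmall p _
    exact halg ε hε _ (measurableSet_cylinderAt σ T hT part hmeas _ n w) hsmall p
  · -- part 2
    intro ε hε
    have hioT : c / C ≠ ⊤ := (ENNReal.div_lt_top hct hC0).ne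
    have hio0 : c / C ≠ 0 := (ENNReal.div_pos hc0 hCtop).ne'
    have htR : 0 < (c / C).toReal := ENNReal.toReal_pos hio0 hioT
    refine ⟨ε * (c / C).toReal, mul_pos hε htR, fun A hA hAs k => ?_⟩
    have hAs' : m A < ENNReal.ofReal ε * c / C := by
      rw [ENNReal.ofReal_mul hε.le, ENNReal.ofReal_toReal hioT, ← mul_div_assoc] at hAs
      exact hAs
    have h2 := halg ε hε A hA hAs' k
    rw [hval k A hA]
    calc (m ((mapCocycle σ T k (σ.symm^[k] ω)) ⁻¹' A)).toReal
        < (ENNReal.ofReal ε).toReal := by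
          rw [ENNReal.toReal_lt_toReal (measure_ne_top m _) ENNReal.ofReal_ne_top]
          exact h2
      _ = ε := ENNReal.toReal_ofReal hε.le
  · -- part 3
    set u : ℕ → Lp ℝ 1 m := fun k => clmCocycle σ L k (σ.symm^[k] ω) (oneLp m) with hu
    set K : ℝ := (C / c).toReal with hK
    have hbound : ∀ k, ∀ᵐ x ∂m, ‖(u k : X → ℝ) x‖ ≤ K := by
      intro k
      have hint : Integrable (u k : X → ℝ) m := L1.integrable_coeFn (u k)
      have h0 : 0 ≤ᵐ[m] (u k : X → ℝ) := by
        refine ae_nonneg_of_forall_setIntegral_nonneg hint (fun s hs _ => ?_)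
        rw [hval k s hs]
        exact ENNReal.toReal_nonneg
      have h1 : ∀ᵐ x ∂m, (u k : X → ℝ) x ≤ K := by
        have h2 : 0 ≤ᵐ[m] fun x => K - (u k : X → ℝ) x := by
          refine ae_nonneg_of_forall_setIntegral_nonneg
            ((integrable_const K).sub hint) (fun s hs _ => ?_)
          rw [integral_sub (integrable_const K).integrableOn hint.integrableOn,
            setIntegral_const, hval k s hs]
          have h3 : (m ((mapCocycle σ T k (σ.symm^[k] ω)) ⁻¹' s)).toReal
              ≤ K * (m s).toReal := by
            calc (m ((mapCocycle σ T k (σ.symm^[k] ω)) ⁻¹' s)).toReal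
                ≤ (C / c * m s).toReal :=
                  ENNReal.toReal_mono (ENNReal.mul_ne_top hdivt (measure_ne_top m s))
                    (hkey k s hs)
              _ = K * (m s).toReal := ENNReal.toReal_mul
          simp only [smul_eq_mul, measureReal_def]
          linarith [h3]
        filter_upwards [h2] with x hx
        simp only [Pi.zero_apply] at hx
        linarith [hx]
      filter_upwards [h0, h1] with x hx0 hx1
      rw [Real.norm_eq_abs, abs_le]
      refine ⟨le_trans (neg_nonpos.mpr ENNReal.toReal_nonneg) ?_, hx1⟩
      simpa using hx0
    exact weaklySeqPrecompact_of_ae_bound u K ENNReal.toReal_nonneg hbound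
end

section
/- Suppose σ is an invertible ergodic ℙ-preserving transformation, P_ω are contractions on a Banach space 𝔛 for ℙ-a.e. ω, f,h,g,r ∈ L¹(Ω,𝔛) satisfy f − h = 𝒫g − g + r with ⟦r⟧₁ < ε, and 𝒫h = h. Then limsup_{n→∞} ‖(𝒜ⁿf)(ω) − h(ω)‖_𝔛 < ε for ℙ-a.e. ω, where 𝒜ⁿ is the Cesàro average of the lift operator 𝒫. -/
open MeasureTheory Filter Function

section Birkhoff

variable {Ω : Type*} [MeasurableSpace Ω] {μ : Measure Ω}

/-- running maximum of Birkhoff sums, `max (0, max_{1 ≤ k ≤ n} S_k ψ)`. -/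
noncomputable def maxS (T : Ω → Ω) (ψ : Ω → ℝ) : ℕ → Ω → ℝ
  | 0 => fun _ => 0
  | n+1 => fun ω => max (maxS T ψ n ω) (birkhoffSum T ψ (n+1) ω)

lemma maxS_nonneg (T : Ω → Ω) (ψ : Ω → ℝ) (n : ℕ) (ω : Ω) : 0 ≤ maxS T ψ n ω := by
  induction n with
  | zero => exact le_refl _
  | succ n ih => exact le_trans ih (le_max_left _ _)

lemma maxS_mono (T : Ω → Ω) (ψ : Ω → ℝ) (n : ℕ) (ω : Ω) :
    maxS T ψ n ω ≤ maxS T ψ (n+1) ω := le_max_left _ _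

lemma birkhoffSum_le_maxS (T : Ω → Ω) (ψ : Ω → ℝ) {k n : ℕ} (hk : k ≤ n) (ω : Ω) :
    birkhoffSum T ψ k ω ≤ maxS T ψ n ω := by
  induction n with
  | zero =>
      interval_cases k
      simp [birkhoffSum_zero, maxS]
  | succ n ih =>
      rcases Nat.lt_or_ge k (n+1) with h | h
      · exact le_trans (ih (Nat.lt_succ_iff.1 h)) (le_max_left _ _)
      · have : k = n + 1 := le_antisymm hk h
        subst this
        exact le_max_right _ _

lemma measurable_birkhoffSum {T : Ω → Ω} (hT : Measurable T) {ψ : Ω → ℝ}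
    (hm : Measurable ψ) (n : ℕ) : Measurable (birkhoffSum T ψ n) := by
  unfold birkhoffSum
  exact Finset.measurable_sum _ (fun k _ => hm.comp (hT.iterate k))

lemma integrable_birkhoffSum {T : Ω → Ω} (hT : MeasurePreserving T μ μ) {ψ : Ω → ℝ}
    (hi : Integrable ψ μ) (n : ℕ) : Integrable (birkhoffSum T ψ n) μ := by
  unfold birkhoffSum
  exact integrable_finset_sum _ (fun k _ => (hT.iterate k).integrable_comp hi.aestronglyMeasurable |>.mpr hi)

lemma measurable_maxS {T : Ω → Ω} (hT : Measurable T) {ψ : Ω → ℝ}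
    (hm : Measurable ψ) (n : ℕ) : Measurable (maxS T ψ n) := by
  induction n with
  | zero => exact measurable_const
  | succ n ih => exact ih.max (measurable_birkhoffSum hT hm (n+1))

lemma integrable_maxS {T : Ω → Ω} (hT : MeasurePreserving T μ μ) {ψ : Ω → ℝ}
    (hm : Measurable ψ) (hi : Integrable ψ μ) (n : ℕ) : Integrable (maxS T ψ n) μ := by
  induction n with
  | zero => simpa [maxS] using (integrable_zero Ω ℝ μ)
  | succ n ih =>
      have : maxS T ψ (n+1) = (maxS T ψ n) ⊔ (birkhoffSum T ψ (n+1)) := rfl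
      rw [this]
      exact ih.sup (integrable_birkhoffSum hT hi (n+1))

lemma maxS_le_max (T : Ω → Ω) (ψ : Ω → ℝ) (n : ℕ) (ω : Ω) :
    maxS T ψ n ω ≤ max 0 (ψ ω + maxS T ψ n (T ω)) := by
  induction n with
  | zero => exact le_max_left _ _
  | succ n ih =>
      refine max_le ?_ ?_
      · refine le_trans ih (max_le (le_max_left _ _) ?_)
        exact le_trans (by linarith [maxS_mono T ψ n (T ω)]) (le_max_right _ _)
      · have h1 : birkhoffSum T ψ (n+1) ω = ψ ω + birkhoffSum T ψ n (T ω) :=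
          birkhoffSum_succ' T ψ n ω
        have h2 : birkhoffSum T ψ n (T ω) ≤ maxS T ψ (n+1) (T ω) :=
          birkhoffSum_le_maxS T ψ (Nat.le_succ n) (T ω)
        refine le_trans ?_ (le_max_right _ _)
        linarith

/-- Garsia's maximal ergodic inequality. -/
lemma garsia {T : Ω → Ω} (hT : MeasurePreserving T μ μ) {ψ : Ω → ℝ}
    (hm : Measurable ψ) (hi : Integrable ψ μ) (n : ℕ) :
    0 ≤ ∫ ω in {ω | 0 < maxS T ψ n ω}, ψ ω ∂μ := by
  set B : Set Ω := {ω | 0 < maxS T ψ n ω} with hB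
  have hBm : MeasurableSet B := measurableSet_lt measurable_const (measurable_maxS hT.measurable hm n)
  have hMi : Integrable (maxS T ψ n) μ := integrable_maxS hT hm hi n
  have hMTi : Integrable (fun ω => maxS T ψ n (T ω)) μ :=
    (hT.integrable_comp hMi.aestronglyMeasurable).mpr hMi
  have hpt : ∀ ω, maxS T ψ n ω - maxS T ψ n (T ω) ≤ B.indicator ψ ω := by
    intro ω
    by_cases hω : ω ∈ B
    · rw [Set.indicator_of_mem hω]
      have h1 := maxS_le_max T ψ n ω
      have h2 : 0 < maxS T ψ n ω := hω
      have h3 : maxS T ψ n ω ≤ ψ ω + maxS T ψ n (T ω) := by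
        rcases le_or_gt (ψ ω + maxS T ψ n (T ω)) 0 with h | h
        · rw [max_eq_left h] at h1; linarith
        · rw [max_eq_right h.le] at h1; linarith
      linarith
    · rw [Set.indicator_of_notMem hω]
      have h2 : maxS T ψ n ω ≤ 0 := not_lt.1 hω
      have := maxS_nonneg T ψ n (T ω)
      linarith
  have hint : ∫ ω, (maxS T ψ n ω - maxS T ψ n (T ω)) ∂μ ≤ ∫ ω, B.indicator ψ ω ∂μ :=
    integral_mono (hMi.sub hMTi) (hi.indicator hBm) hpt
  have h1 : AEStronglyMeasurable (maxS T ψ n) (Measure.map T μ) := by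
    rw [hT.map_eq]; exact hMi.aestronglyMeasurable
  have hcomp : ∫ ω, maxS T ψ n (T ω) ∂μ = ∫ ω, maxS T ψ n ω ∂μ := by
    calc ∫ ω, maxS T ψ n (T ω) ∂μ
        = ∫ ω, maxS T ψ n ω ∂(Measure.map T μ) := (integral_map hT.aemeasurable h1).symm
      _ = ∫ ω, maxS T ψ n ω ∂μ := by rw [hT.map_eq]
  rw [integral_sub hMi hMTi, hcomp, sub_self, integral_indicator hBm] at hint
  exact hint

end Birkhoff
section MainErgodic

variable {Ω : Type*} [MeasurableSpace Ω] {μ : Measure Ω} [IsProbabilityMeasure μ]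

lemma tendsto_aux1 (a b : ℝ) :
    Tendsto (fun n : ℕ => (a + (n:ℝ) * b)/((n:ℝ)+1)) atTop (nhds b) := by
  have h0 : Tendsto (fun n : ℕ => ((n:ℝ)+1)) atTop atTop :=
    tendsto_atTop_add_const_right atTop 1 tendsto_natCast_atTop_atTop
  have h1 : Tendsto (fun n : ℕ => (a - b)/((n:ℝ)+1)) atTop (nhds 0) :=
    Tendsto.div_atTop tendsto_const_nhds h0
  have heq : ∀ n : ℕ, (a + (n:ℝ) * b)/((n:ℝ)+1) = b + (a - b)/((n:ℝ)+1) := by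
    intro n
    have hne : ((n:ℝ)+1) ≠ 0 := by positivity
    field_simp
    ring
  simp only [heq]
  simpa using tendsto_const_nhds.add h1

lemma tendsto_aux2 (a b : ℝ) :
    Tendsto (fun m : ℕ => ((m:ℝ) * b - a)/((m:ℝ)-1)) atTop (nhds b) := by
  have h0 : Tendsto (fun m : ℕ => ((m:ℝ)-1)) atTop atTop :=
    tendsto_atTop_add_const_right atTop (-1) tendsto_natCast_atTop_atTop
  have h1 : Tendsto (fun m : ℕ => (b - a)/((m:ℝ)-1)) atTop (nhds 0) :=
    Tendsto.div_atTop tendsto_const_nhds h0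
  have heq : ∀ᶠ m : ℕ in atTop, b + (b - a)/((m:ℝ)-1) = ((m:ℝ) * b - a)/((m:ℝ)-1) := by
    filter_upwards [eventually_ge_atTop 2] with m hm
    have hne : ((m:ℝ)-1) ≠ 0 := by
      have : (2:ℝ) ≤ (m:ℝ) := by exact_mod_cast hm
      nlinarith
    field_simp
    ring
  exact Tendsto.congr' heq (by simpa using tendsto_const_nhds.add h1)

lemma ae_eventually_birkhoffAverage_lt {T : Ω → Ω} (hT : Ergodic T μ)
    {φ : Ω → ℝ} (hm : Measurable φ) (hi : Integrable φ μ) {c : ℝ}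
    (hc : ∫ x, φ x ∂μ < c) :
    ∀ᵐ ω ∂μ, ∀ᶠ n : ℕ in atTop, (n:ℝ)⁻¹ * birkhoffSum T φ n ω < c := by
  set c0 : ℝ := ((∫ x, φ x ∂μ) + c)/2 with hc0
  have hc0a : ∫ x, φ x ∂μ < c0 := by rw [hc0]; linarith
  have hc0b : c0 < c := by rw [hc0]; linarith
  set A : ℕ → Ω → ℝ := fun n ω => (n:ℝ)⁻¹ * birkhoffSum T φ n ω with hA
  set E : Set Ω := {ω | ∃ q : ℚ, c0 < (q:ℝ) ∧ ∃ᶠ n in atTop, (q:ℝ) ≤ A n ω} with hE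
  have hEm : MeasurableSet E := by
    have hrw : E = ⋃ (q : ℚ), ⋃ (_ : c0 < (q:ℝ)), ⋂ (m : ℕ), ⋃ (n : ℕ), ⋃ (_ : m ≤ n),
        {ω | (q:ℝ) ≤ A n ω} := by
      ext ω
      simp only [hE, Set.mem_setOf_eq, Set.mem_iUnion, Set.mem_iInter, frequently_atTop, exists_prop, ge_iff_le]
    rw [hrw]
    refine MeasurableSet.iUnion fun q => MeasurableSet.iUnion fun _ =>
      MeasurableSet.iInter fun m => MeasurableSet.iUnion fun n => MeasurableSet.iUnion fun _ => ?_
    exact measurableSet_le measurable_const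
      ((measurable_birkhoffSum hT.measurable hm n).const_mul _)
  -- n • q ≤ S n  from  q ≤ A n
  have hmulS : ∀ (q : ℝ) (n : ℕ) (x : Ω), 1 ≤ n → q ≤ A n x →
      (n:ℝ) * q ≤ birkhoffSum T φ n x := by
    intro q n x hn hq
    have hnpos : (0:ℝ) < (n:ℝ) := by exact_mod_cast hn
    calc (n:ℝ) * q ≤ (n:ℝ) * ((n:ℝ)⁻¹ * birkhoffSum T φ n x) :=
          mul_le_mul_of_nonneg_left hq hnpos.le
      _ = birkhoffSum T φ n x := by
          rw [← mul_assoc, mul_inv_cancel₀ (ne_of_gt hnpos), one_mul]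
  have hfwd : ∀ ω, T ω ∈ E → ω ∈ E := by
    rintro ω ⟨q, hq, hfreq⟩
    obtain ⟨q', hq1', hq2'⟩ := exists_rat_btwn hq
    refine ⟨q', hq1', ?_⟩
    have hev : ∀ᶠ n : ℕ in atTop, (q':ℝ) < (φ ω + (n:ℝ) * q)/((n:ℝ)+1) :=
      (tendsto_aux1 (φ ω) q).eventually (eventually_gt_nhds hq2')
    have hkey := hfreq.and_eventually (hev.and (eventually_ge_atTop 1))
    rw [frequently_atTop] at hkey ⊢
    intro M
    obtain ⟨n, hnM, h₁, h₂, h₃⟩ := hkey M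
    refine ⟨n + 1, by omega, ?_⟩
    have hSn : (n:ℝ) * q ≤ birkhoffSum T φ n (T ω) := hmulS q n (T ω) h₃ h₁
    have hpos : (0:ℝ) < (n:ℝ)+1 := by positivity
    have hle : (φ ω + (n:ℝ)*q)/((n:ℝ)+1) ≤ (φ ω + birkhoffSum T φ n (T ω))/((n:ℝ)+1) := by
      gcongr
    have : (q':ℝ) ≤ (φ ω + birkhoffSum T φ n (T ω))/((n:ℝ)+1) := le_trans h₂.le hle
    show (q':ℝ) ≤ A (n+1) ω
    rw [hA]
    simp only []
    rw [birkhoffSum_succ' T φ n ω]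
    push_cast
    rw [inv_mul_eq_div]
    exact this
  have hbwd : ∀ ω, ω ∈ E → T ω ∈ E := by
    rintro ω ⟨q, hq, hfreq⟩
    obtain ⟨q', hq1', hq2'⟩ := exists_rat_btwn hq
    refine ⟨q', hq1', ?_⟩
    have hev : ∀ᶠ m : ℕ in atTop,
        ((q':ℝ) < ((m:ℝ) * q - φ ω)/((m:ℝ)-1)) ∧ 2 ≤ m :=
      ((tendsto_aux2 (φ ω) q).eventually (eventually_gt_nhds hq2')).and (eventually_ge_atTop 2)
    have hkey := hfreq.and_eventually hev
    rw [frequently_atTop] at hkey ⊢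
    intro M
    obtain ⟨m, hmM, h₁, h₂, h₃⟩ := hkey (M + 2)
    refine ⟨m - 1, by omega, ?_⟩
    have hm1 : m - 1 + 1 = m := by omega
    have hSm : (m:ℝ) * q ≤ birkhoffSum T φ m ω := hmulS q m ω (by omega) h₁
    have hS' : birkhoffSum T φ m ω = φ ω + birkhoffSum T φ (m-1) (T ω) := by
      conv_lhs => rw [← hm1]
      exact birkhoffSum_succ' T φ (m-1) ω
    have hcast : ((m - 1 : ℕ):ℝ) = (m:ℝ) - 1 := by
      have : (1:ℕ) ≤ m := by omega
      push_cast [this]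
      ring
    have hnpos : (0:ℝ) < (m:ℝ) - 1 := by
      have : (2:ℝ) ≤ (m:ℝ) := by exact_mod_cast h₃
      linarith
    have hle : ((m:ℝ) * q - φ ω)/((m:ℝ)-1) ≤ (birkhoffSum T φ m ω - φ ω)/((m:ℝ)-1) := by
      gcongr
    show (q':ℝ) ≤ A (m-1) (T ω)
    rw [hA]
    simp only []
    rw [hcast, inv_mul_eq_div]
    have : birkhoffSum T φ (m-1) (T ω) = birkhoffSum T φ m ω - φ ω := by
      rw [hS']; ring
    rw [this]
    exact le_trans h₂.le hle
  have hinv : T ⁻¹' E = E := Set.ext fun ω => ⟨hfwd ω, hbwd ω⟩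
  rcases hT.toPreErgodic.ae_empty_or_univ hEm hinv with h0 | h1
  · -- E is null: a.e. eventual bound
    have hnull : μ E = 0 := by
      rw [← Set.bot_eq_empty] at h0
      exact ae_eq_empty.1 h0
    have hae : ∀ᵐ ω ∂μ, ω ∉ E := (measure_eq_zero_iff_ae_notMem).1 hnull
    obtain ⟨q, hq1, hq2⟩ := exists_rat_btwn hc0b
    filter_upwards [hae] with ω hω
    have hnf : ¬ ∃ᶠ n in atTop, (q:ℝ) ≤ A n ω := fun hf => hω ⟨q, hq1, hf⟩
    rw [not_frequently] at hnf
    filter_upwards [hnf] with n hn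
    have := not_le.1 hn
    calc (n:ℝ)⁻¹ * birkhoffSum T φ n ω = A n ω := rfl
      _ < (q:ℝ) := this
      _ < c := hq2
  · -- E is conull: contradiction with Garsia
    exfalso
    set ψ : Ω → ℝ := fun ω => φ ω - c0 with hψ
    have hψm : Measurable ψ := hm.sub measurable_const
    have hψi : Integrable ψ μ := hi.sub (integrable_const c0)
    have hψint : ∫ x, ψ x ∂μ = (∫ x, φ x ∂μ) - c0 := by
      rw [hψ]
      rw [integral_sub hi (integrable_const c0), integral_const]
      simp
    set B : ℕ → Set Ω := fun n => {ω | 0 < maxS T ψ n ω} with hB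
    have hBmeas : ∀ n, MeasurableSet (B n) := fun n =>
      measurableSet_lt measurable_const (measurable_maxS hT.measurable hψm n)
    have hBmono : Monotone B := by
      refine monotone_nat_of_le_succ fun n ω hω => ?_
      exact lt_of_lt_of_le hω (maxS_mono T ψ n ω)
    have hEB : E ⊆ ⋃ n, B n := by
      rintro ω ⟨q, hq, hfreq⟩
      obtain ⟨n, hn1, hn2⟩ := (hfreq.and_eventually (eventually_ge_atTop 1)).exists
      refine Set.mem_iUnion.2 ⟨n, ?_⟩
      show 0 < maxS T ψ n ω
      have hSq : (n:ℝ) * q ≤ birkhoffSum T φ n ω := hmulS q n ω hn2 hn1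
      have hsψ : birkhoffSum T ψ n ω = birkhoffSum T φ n ω - (n:ℝ) * c0 := by
        simp only [hψ, birkhoffSum, Finset.sum_sub_distrib, Finset.sum_const,
          Finset.card_range, nsmul_eq_mul]
      have hnpos : (0:ℝ) < (n:ℝ) := by exact_mod_cast hn2
      have h0S : 0 < birkhoffSum T ψ n ω := by
        have hlt : (n:ℝ) * c0 < (n:ℝ) * q := by
          exact mul_lt_mul_of_pos_left hq hnpos
        rw [hsψ]; linarith
      exact lt_of_lt_of_le h0S (birkhoffSum_le_maxS T ψ (le_refl n) ω)
    have hU1 : μ (⋃ n, B n)ᶜ = 0 := by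
      refine measure_mono_null (Set.compl_subset_compl.2 hEB) ?_
      exact ae_eq_univ.1 h1
    have htend : Tendsto (fun n => ∫ ω in B n, ψ ω ∂μ) atTop
        (nhds (∫ ω in ⋃ n, B n, ψ ω ∂μ)) :=
      tendsto_setIntegral_of_monotone hBmeas hBmono hψi.integrableOn
    have hlim : 0 ≤ ∫ ω in ⋃ n, B n, ψ ω ∂μ :=
      ge_of_tendsto htend (Eventually.of_forall fun n => garsia hT.toMeasurePreserving hψm hψi n)
    have hfull : ∫ ω in ⋃ n, B n, ψ ω ∂μ = ∫ ω, ψ ω ∂μ := by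
      rw [setIntegral_congr_set (ae_eq_univ.2 hU1), setIntegral_univ]
    rw [hfull, hψint] at hlim
    linarith

end MainErgodic
section Corollaries

variable {Ω : Type*} [MeasurableSpace Ω] {μ : Measure Ω} [IsProbabilityMeasure μ]

lemma birkhoffSum_neg' (T : Ω → Ω) (φ : Ω → ℝ) (n : ℕ) (ω : Ω) :
    birkhoffSum T (fun x => -φ x) n ω = -birkhoffSum T φ n ω := by
  simp [birkhoffSum]

lemma ae_tendsto_birkhoffAverage {T : Ω → Ω} (hT : Ergodic T μ)
    {φ : Ω → ℝ} (hm : Measurable φ) (hi : Integrable φ μ) :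
    ∀ᵐ ω ∂μ, Tendsto (fun n : ℕ => (n:ℝ)⁻¹ * birkhoffSum T φ n ω) atTop
      (nhds (∫ x, φ x ∂μ)) := by
  have key : ∀ j : ℕ, ∀ᵐ ω ∂μ, ∀ᶠ n : ℕ in atTop,
      |(n:ℝ)⁻¹ * birkhoffSum T φ n ω - ∫ x, φ x ∂μ| < 1/((j:ℝ)+1) := by
    intro j
    have hδ : (0:ℝ) < 1/((j:ℝ)+1) := by positivity
    have h1 := ae_eventually_birkhoffAverage_lt hT hm hi
      (c := (∫ x, φ x ∂μ) + 1/((j:ℝ)+1)) (by linarith)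
    have h2 := ae_eventually_birkhoffAverage_lt hT hm.neg hi.neg
      (c := -(∫ x, φ x ∂μ) + 1/((j:ℝ)+1)) (by simp only [Pi.neg_apply, integral_neg]; linarith)
    filter_upwards [h1, h2] with ω hω1 hω2
    filter_upwards [hω1, hω2] with n hn1 hn2
    rw [abs_lt]
    constructor
    · have he : (n:ℝ)⁻¹ * birkhoffSum T (fun x => -φ x) n ω
          = -((n:ℝ)⁻¹ * birkhoffSum T φ n ω) := by
        rw [birkhoffSum_neg']; ring
      change (n:ℝ)⁻¹ * birkhoffSum T (fun x => -φ x) n ω < _ at hn2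
      rw [he] at hn2
      linarith
    · linarith
  rw [← ae_all_iff] at key
  filter_upwards [key] with ω hω
  rw [Metric.tendsto_atTop]
  intro ε hε
  obtain ⟨j, hj⟩ := exists_nat_one_div_lt hε
  obtain ⟨N, hN⟩ := eventually_atTop.1 (hω j)
  refine ⟨N, fun n hn => ?_⟩
  rw [Real.dist_eq]
  exact lt_trans (hN n hn) hj

lemma ae_tendsto_inv_comp {T : Ω → Ω} (hT : Ergodic T μ)
    {φ : Ω → ℝ} (hm : Measurable φ) (hi : Integrable φ μ) :
    ∀ᵐ ω ∂μ, Tendsto (fun n : ℕ => (n:ℝ)⁻¹ * φ (T^[n] ω)) atTop (nhds 0) := by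
  filter_upwards [ae_tendsto_birkhoffAverage hT hm hi] with ω hconv
  set L := ∫ x, φ x ∂μ with hL
  have hA1 : Tendsto (fun n : ℕ => (((n+1:ℕ)):ℝ)⁻¹ * birkhoffSum T φ (n+1) ω) atTop (nhds L) := by
    exact hconv.comp (tendsto_add_atTop_nat 1)
  have hq : Tendsto (fun n : ℕ => ((n:ℝ)+1)/(n:ℝ)) atTop (nhds 1) := by
    have h1 : Tendsto (fun n : ℕ => 1 + 1/(n:ℝ)) atTop (nhds 1) := by
      simpa using tendsto_const_nhds.add (tendsto_one_div_atTop_nhds_zero_nat (𝕜 := ℝ))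
    refine Tendsto.congr' ?_ h1
    filter_upwards [eventually_ge_atTop 1] with n hn
    have hne : (n:ℝ) ≠ 0 := by
      exact Nat.cast_ne_zero.2 (by omega)
    field_simp
  have hmain : Tendsto (fun n : ℕ =>
      ((n:ℝ)+1)/(n:ℝ) * ((((n+1:ℕ)):ℝ)⁻¹ * birkhoffSum T φ (n+1) ω)
        - (n:ℝ)⁻¹ * birkhoffSum T φ n ω) atTop (nhds 0) := by
    have := (hq.mul hA1).sub hconv
    simpa using this
  refine Tendsto.congr' ?_ hmain
  filter_upwards [eventually_ge_atTop 1] with n hn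
  have hnpos : (0:ℝ) < (n:ℝ) := by exact_mod_cast hn
  have hne : (n:ℝ) ≠ 0 := hnpos.ne'
  have hne1 : ((n:ℝ)+1) ≠ 0 := by positivity
  have hS : birkhoffSum T φ (n+1) ω = birkhoffSum T φ n ω + φ (T^[n] ω) :=
    birkhoffSum_succ T φ n ω
  rw [hS]
  push_cast
  field_simp
  ring

end Corollaries
lemma Lp_coeFn_finset_sum {α E : Type*} [MeasurableSpace α] {μ : Measure α}
    [NormedAddCommGroup E] {p : ENNReal} {ι : Type*} (s : Finset ι) (F : ι → Lp E p μ) :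
    ⇑(∑ i ∈ s, F i) =ᵐ[μ] fun ω => ∑ i ∈ s, (F i) ω := by
  classical
  induction s using Finset.induction_on with
  | empty =>
      simp only [Finset.sum_empty]
      filter_upwards [Lp.coeFn_zero E p μ] with ω hω
      simpa using hω
  | insert a s' hnotmem ih =>
      rw [Finset.sum_insert hnotmem]
      filter_upwards [Lp.coeFn_add (F a) (∑ i ∈ s', F i), ih] with ω h1 h2
      simp only [h1, Pi.add_apply, h2, Finset.sum_insert hnotmem]

/-- If `f − h = 𝒫g − g + r` with `⟦r⟧₁ < ε` and `𝒫h = h`, where `𝒫` is the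
lift of an a.e. contraction cocycle over an invertible ergodic base, then the
Cesàro averages satisfy `limsup_n ‖(𝒜ⁿf)(ω) − h(ω)‖ < ε` for ℙ-a.e. `ω`. -/
theorem cesaro_limsup_lt_of_coboundary
    {Ω : Type*} [MeasurableSpace Ω] (ℙ : Measure Ω) [IsProbabilityMeasure ℙ]
    {𝔛 : Type*} [NormedAddCommGroup 𝔛] [NormedSpace ℝ 𝔛]
    (σ : Ω ≃ᵐ Ω) (hσ : Ergodic σ ℙ)
    (P : Ω → (𝔛 →L[ℝ] 𝔛)) (hcontr : ∀ᵐ ω ∂ℙ, ‖P ω‖ ≤ 1)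
    (Plift : Lp 𝔛 1 ℙ →ₗ[ℝ] Lp 𝔛 1 ℙ)
    (hlift : ∀ u : Lp 𝔛 1 ℙ,
      ⇑(Plift u) =ᵐ[ℙ] fun ω => P (σ.symm ω) (u (σ.symm ω)))
    (ε : ℝ) (f h g r : Lp 𝔛 1 ℙ)
    (hdecomp : f - h = Plift g - g + r)
    (hr : ‖r‖ < ε)
    (hfix : Plift h = h) :
    ∀ᵐ ω ∂ℙ,
      Filter.limsup
        (fun n : ℕ =>
          ‖(((n : ℝ)⁻¹ • ∑ k ∈ Finset.range n, (Plift ^ k) f : Lp 𝔛 1 ℙ)) ω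
            - h ω‖) atTop < ε := by
  classical
  set T : Ω → Ω := ⇑σ.symm with hTdef
  have hmpT : MeasurePreserving T ℙ ℙ := MeasurePreserving.symm σ hσ.toMeasurePreserving
  have hTergo : Ergodic T ℙ := by
    refine ⟨hmpT, ⟨fun s hs hinv => ?_⟩⟩
    refine hσ.toPreErgodic.aeconst_set hs ?_
    have h1 : (⇑σ) ⁻¹' (T ⁻¹' s) = ⇑σ ⁻¹' s := by rw [hinv]
    rw [← h1]
    ext x
    simp [hTdef]
  have hqmpT := hmpT.quasiMeasurePreserving
  -- measurable representatives of the norms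
  have hgae : AEMeasurable (fun ω => ‖g ω‖) ℙ := (Lp.aestronglyMeasurable g).norm.aemeasurable
  have hrae : AEMeasurable (fun ω => ‖r ω‖) ℙ := (Lp.aestronglyMeasurable r).norm.aemeasurable
  set φg : Ω → ℝ := hgae.mk _ with hφgdef
  set φr : Ω → ℝ := hrae.mk _ with hφrdef
  have hφgm : Measurable φg := hgae.measurable_mk
  have hφrm : Measurable φr := hrae.measurable_mk
  have hφg_eq : ∀ᵐ ω ∂ℙ, ‖g ω‖ = φg ω := hgae.ae_eq_mk
  have hφr_eq : ∀ᵐ ω ∂ℙ, ‖r ω‖ = φr ω := hrae.ae_eq_mk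
  have hφgi : Integrable φg ℙ := (L1.integrable_coeFn g).norm.congr hφg_eq
  have hφri : Integrable φr ℙ := (L1.integrable_coeFn r).norm.congr hφr_eq
  have hφr_int : ∫ ω, φr ω ∂ℙ = ‖r‖ := by
    rw [← integral_congr_ae hφr_eq]
    exact (L1.norm_eq_integral_norm r).symm
  -- iterated contraction bound
  have hnormPk : ∀ (u : Lp 𝔛 1 ℙ) (k : ℕ), ∀ᵐ ω ∂ℙ, ‖((Plift ^ k) u) ω‖ ≤ ‖u (T^[k] ω)‖ := by
    intro u k
    induction k with
    | zero =>
        filter_upwards with ω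
        simp
    | succ k ih =>
        have h1 := hlift ((Plift ^ k) u)
        have h2 : ∀ᵐ ω ∂ℙ, ‖P (σ.symm ω)‖ ≤ 1 := hqmpT.ae hcontr
        have h3 : ∀ᵐ ω ∂ℙ, ‖((Plift ^ k) u) (σ.symm ω)‖ ≤ ‖u (T^[k] (σ.symm ω))‖ :=
          hqmpT.ae ih
        have hps : (Plift ^ (k+1)) u = Plift ((Plift ^ k) u) := by
          rw [pow_succ']; rfl
        rw [hps]
        filter_upwards [h1, h2, h3] with ω e1 e2 e3
        rw [e1]
        calc ‖P (σ.symm ω) (((Plift ^ k) u) (σ.symm ω))‖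
            ≤ ‖P (σ.symm ω)‖ * ‖((Plift ^ k) u) (σ.symm ω)‖ :=
              ContinuousLinearMap.le_opNorm _ _
          _ ≤ 1 * ‖u (T^[k] (σ.symm ω))‖ :=
              mul_le_mul e2 e3 (norm_nonneg _) zero_le_one
          _ = ‖u (T^[k+1] ω)‖ := by
              rw [one_mul, ← Function.iterate_succ_apply]
  -- the fixed point is fixed by all powers
  have hPkh : ∀ k : ℕ, (Plift ^ k) h = h := by
    intro k
    induction k with
    | zero => simp
    | succ k ih => rw [pow_succ, Module.End.mul_apply, hfix, ih]
  -- the Lp-level decomposition of the Cesàro average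
  have hLp : ∀ n : ℕ, 1 ≤ n →
      ((n:ℝ)⁻¹ • ∑ k ∈ Finset.range n, (Plift ^ k) f : Lp 𝔛 1 ℙ) - h
      = ((n:ℝ)⁻¹ • (((Plift ^ n) g - g) + ∑ k ∈ Finset.range n, (Plift ^ k) r) : Lp 𝔛 1 ℙ) := by
    intro n hn
    have hf2 : f = h + ((Plift g - g) + r) := by rw [← hdecomp]; abel
    have hterm : ∀ k : ℕ, (Plift ^ k) f
        = h + (((Plift ^ (k+1)) g - (Plift ^ k) g) + (Plift ^ k) r) := by
      intro k
      have hpow : (Plift ^ k) (Plift g) = (Plift ^ (k+1)) g := by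
        rw [pow_succ, Module.End.mul_apply]
      rw [hf2, map_add, map_add, map_sub, hPkh k, hpow]
    have hsum : ∑ k ∈ Finset.range n, (Plift ^ k) f
        = n • h + (((Plift ^ n) g - g) + ∑ k ∈ Finset.range n, (Plift ^ k) r) := by
      rw [Finset.sum_congr rfl fun k _ => hterm k, Finset.sum_add_distrib, Finset.sum_const,
        Finset.card_range, Finset.sum_add_distrib,
        Finset.sum_range_sub (fun k => (Plift ^ k) g)]
      simp
    rw [hsum, smul_add, ← Nat.cast_smul_eq_nsmul ℝ n h, smul_smul,
      inv_mul_cancel₀ (Nat.cast_ne_zero.2 (by omega) : (n:ℝ) ≠ 0), one_smul]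
    abel
  -- pointwise a.e. bound on the Cesàro average
  have hbound : ∀ᵐ ω ∂ℙ, ∀ n : ℕ, 1 ≤ n →
      ‖(((n : ℝ)⁻¹ • ∑ k ∈ Finset.range n, (Plift ^ k) f : Lp 𝔛 1 ℙ)) ω - h ω‖
        ≤ (n:ℝ)⁻¹ * (φg (T^[n] ω) + φg ω) + (n:ℝ)⁻¹ * birkhoffSum T φr n ω := by
    rw [ae_all_iff]
    intro n
    by_cases hn : 1 ≤ n
    swap
    · filter_upwards with ω
      intro hcon
      exact absurd hcon hn
    have e0 := Lp.coeFn_sub ((n:ℝ)⁻¹ • ∑ k ∈ Finset.range n, (Plift ^ k) f : Lp 𝔛 1 ℙ) h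
    rw [hLp n hn] at e0
    have e1 := Lp.coeFn_smul ((n:ℝ)⁻¹)
      ((((Plift ^ n) g - g) + ∑ k ∈ Finset.range n, (Plift ^ k) r : Lp 𝔛 1 ℙ))
    have e2 := Lp.coeFn_add ((Plift ^ n) g - g : Lp 𝔛 1 ℙ)
      (∑ k ∈ Finset.range n, (Plift ^ k) r : Lp 𝔛 1 ℙ)
    have e3 := Lp.coeFn_sub ((Plift ^ n) g : Lp 𝔛 1 ℙ) g
    have e4 := Lp_coeFn_finset_sum (Finset.range n) (fun k => ((Plift ^ k) r : Lp 𝔛 1 ℙ))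
    have e5 := hnormPk g n
    have e6 : ∀ᵐ ω ∂ℙ, ‖g (T^[n] ω)‖ = φg (T^[n] ω) :=
      ((hmpT.iterate n).quasiMeasurePreserving).ae hφg_eq
    have e7 : ∀ᵐ ω ∂ℙ, ∀ k, ‖((Plift ^ k) r) ω‖ ≤ φr (T^[k] ω) := by
      rw [ae_all_iff]
      intro k
      filter_upwards [hnormPk r k,
        ((hmpT.iterate k).quasiMeasurePreserving).ae hφr_eq] with ω a b
      rw [← b]
      exact a
    filter_upwards [e0, e1, e2, e3, e4, e5, e6, e7, hφg_eq] with ω a0 a1 a2 a3 a4 a5 a6 a7 a8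
    intro _
    have hrw : (((n : ℝ)⁻¹ • ∑ k ∈ Finset.range n, (Plift ^ k) f : Lp 𝔛 1 ℙ)) ω - h ω
        = (n:ℝ)⁻¹ • ((((Plift ^ n) g) ω - g ω) + ∑ k ∈ Finset.range n, ((Plift ^ k) r) ω) := by
      have ha0 := a0
      simp only [Pi.sub_apply] at ha0
      rw [← ha0, a1]
      simp only [Pi.smul_apply, a2, Pi.add_apply, a3, Pi.sub_apply, a4]
    rw [hrw]
    have hinv_nonneg : (0:ℝ) ≤ (n:ℝ)⁻¹ := by positivity
    calc ‖(n:ℝ)⁻¹ • ((((Plift ^ n) g) ω - g ω) + ∑ k ∈ Finset.range n, ((Plift ^ k) r) ω)‖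
        = (n:ℝ)⁻¹ * ‖(((Plift ^ n) g) ω - g ω) + ∑ k ∈ Finset.range n, ((Plift ^ k) r) ω‖ := by
          rw [norm_smul, Real.norm_eq_abs, abs_of_nonneg hinv_nonneg]
      _ ≤ (n:ℝ)⁻¹ * ((‖((Plift ^ n) g) ω‖ + ‖g ω‖) + ∑ k ∈ Finset.range n, ‖((Plift ^ k) r) ω‖) := by
          refine mul_le_mul_of_nonneg_left ?_ hinv_nonneg
          refine le_trans (norm_add_le _ _) ?_
          exact add_le_add (norm_sub_le _ _) (norm_sum_le _ _)
      _ ≤ (n:ℝ)⁻¹ * ((φg (T^[n] ω) + φg ω) + birkhoffSum T φr n ω) := by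
          refine mul_le_mul_of_nonneg_left ?_ hinv_nonneg
          refine add_le_add (add_le_add (le_trans a5 (le_of_eq a6)) (le_of_eq a8)) ?_
          exact Finset.sum_le_sum fun k _ => a7 k
      _ = (n:ℝ)⁻¹ * (φg (T^[n] ω) + φg ω) + (n:ℝ)⁻¹ * birkhoffSum T φr n ω := by
          ring
  -- Birkhoff statements
  set c : ℝ := (‖r‖ + ε)/2 with hcdef
  have hcε : c < ε := by rw [hcdef]; linarith
  have Hr := ae_eventually_birkhoffAverage_lt hTergo hφrm hφri
    (c := c) (by rw [hφr_int, hcdef]; linarith)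
  have Hg := ae_tendsto_inv_comp hTergo hφgm hφgi
  filter_upwards [hbound, Hr, Hg] with ω hb hr' hg'
  set c' : ℝ := (c + ε)/2 with hc'def
  have hcc' : c < c' := by rw [hc'def]; linarith
  have hc'ε : c' < ε := by rw [hc'def]; linarith
  have hterm2 : Tendsto (fun n : ℕ => (n:ℝ)⁻¹ * φg ω) atTop (nhds 0) := by
    simpa using (tendsto_inv_atTop_nhds_zero_nat (𝕜 := ℝ)).mul_const (φg ω)
  have hgsum : Tendsto (fun n : ℕ => (n:ℝ)⁻¹ * (φg (T^[n] ω) + φg ω)) atTop (nhds 0) := by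
    have := hg'.add hterm2
    simpa [mul_add] using this
  have hev : ∀ᶠ n : ℕ in atTop,
      ‖(((n : ℝ)⁻¹ • ∑ k ∈ Finset.range n, (Plift ^ k) f : Lp 𝔛 1 ℙ)) ω - h ω‖ ≤ c' := by
    have h1 : ∀ᶠ n : ℕ in atTop, (n:ℝ)⁻¹ * (φg (T^[n] ω) + φg ω) < c' - c :=
      hgsum.eventually (eventually_lt_nhds (by linarith))
    filter_upwards [h1, hr', eventually_ge_atTop 1] with n h1' h2' hn1
    calc ‖(((n : ℝ)⁻¹ • ∑ k ∈ Finset.range n, (Plift ^ k) f : Lp 𝔛 1 ℙ)) ω - h ω‖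
        ≤ (n:ℝ)⁻¹ * (φg (T^[n] ω) + φg ω) + (n:ℝ)⁻¹ * birkhoffSum T φr n ω := hb n hn1
      _ ≤ (c' - c) + c := add_le_add h1'.le h2'.le
      _ = c' := by ring
  have hbdd : IsBoundedUnder (· ≥ ·) atTop
      (fun n : ℕ => ‖(((n : ℝ)⁻¹ • ∑ k ∈ Finset.range n, (Plift ^ k) f : Lp 𝔛 1 ℙ)) ω - h ω‖) :=
    ⟨0, eventually_map.2 (Eventually.of_forall fun n => norm_nonneg _)⟩
  exact lt_of_le_of_lt (limsup_le_of_le hbdd.isCoboundedUnder_le hev) hc'ε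
end
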